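/- Let (Ω, 𝓕, P) be a probability space carrying real random variables Y, Y', Y'', τ, T, T' such that: Y' and Y'' each have the same distribution as Y; the random variables Y', Y'', τ, T, T' are mutually independent; τ is uniformly distributed on [0,1]; T and T' are exponentially distributed with rate 2 (mean 1/2); Y is square-integrable; and Y has the same distribution as τ²·Y' + (1−τ)²·Y'' + (1/2)τ²·T + (1/2)(1−τ)²·T' − τ(1−τ). Then E[Y] = 0 and Var(Y) = 1/16. -/

import Mathlib

open MeasureTheory ProbabilityTheory Real Set
open scoped ENNReal NNReal

section Aux

lemma aux_iIndepFun_congr {Ω ι : Type*} [MeasurableSpace Ω] {μ : Measure Ω}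
    {β : ι → Type*} [m : ∀ i, MeasurableSpace (β i)] {f g : ∀ i, Ω → β i}
    (hfg : ∀ i, f i =ᵐ[μ] g i) (hf : iIndepFun f μ) : iIndepFun g μ := by
  rw [iIndepFun_iff_measure_inter_preimage_eq_mul] at hf ⊢
  intro S sets H
  have hpre : ∀ i, (g i ⁻¹' sets i : Set Ω) =ᵐ[μ] (f i ⁻¹' sets i : Set Ω) := by
    intro i
    filter_upwards [hfg i] with ω hω
    show (g i ω ∈ sets i) = (f i ω ∈ sets i)
    rw [hω]
  have hIter : ∀ (S : Finset ι), ((⋂ i ∈ S, g i ⁻¹' sets i : Set Ω)) =ᵐ[μ]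
      (⋂ i ∈ S, f i ⁻¹' sets i : Set Ω) := by
    classical
    intro S
    induction S using Finset.induction with
    | empty => simp
    | insert _ _ ha ih =>
      simp only [Finset.set_biInter_insert]
      exact (hpre _).inter ih
  rw [measure_congr (hIter S), hf S H]
  exact Finset.prod_congr rfl fun i _ => (measure_congr (hpre i)).symm

variable {Ω : Type*} [MeasurableSpace Ω] {μ : Measure Ω}

lemma aux_pair {τ U : Ω → ℝ} {g ψ : ℝ → ℝ}
    (h : IndepFun τ U μ) (hg : Measurable g) (hψ : Measurable ψ)
    (hτm : Measurable τ) (hUm : Measurable U)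
    (hgi : Integrable (fun ω => g (τ ω)) μ) (hUi : Integrable (fun ω => ψ (U ω)) μ) :
    Integrable (fun ω => g (τ ω) * ψ (U ω)) μ ∧
    ∫ ω, g (τ ω) * ψ (U ω) ∂μ = (∫ ω, g (τ ω) ∂μ) * ∫ ω, ψ (U ω) ∂μ := by
  have h1 : IndepFun (fun ω => g (τ ω)) (fun ω => ψ (U ω)) μ := h.comp hg hψ
  refine ⟨h1.integrable_mul hgi hUi, ?_⟩
  exact h1.integral_fun_mul_eq_mul_integral ((hg.comp hτm).aestronglyMeasurable) ((hψ.comp hUm).aestronglyMeasurable)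

lemma aux_trip {τ U V : Ω → ℝ} {g : ℝ → ℝ}
    (hpair : IndepFun (fun ω => (τ ω, U ω)) V μ) (hτU : IndepFun τ U μ)
    (hg : Measurable g) (hτm : Measurable τ) (hUm : Measurable U) (hVm : Measurable V)
    (hgi : Integrable (fun ω => g (τ ω)) μ) (hUi : Integrable U μ) (hVi : Integrable V μ) :
    Integrable (fun ω => g (τ ω) * U ω * V ω) μ ∧
    ∫ ω, g (τ ω) * U ω * V ω ∂μ =
      (∫ ω, g (τ ω) ∂μ) * (∫ ω, U ω ∂μ) * ∫ ω, V ω ∂μ := by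
  have hm : Measurable (fun p : ℝ × ℝ => g p.1 * p.2) :=
    (hg.comp measurable_fst).mul measurable_snd
  have h1 : IndepFun (fun ω => g (τ ω) * U ω) V μ := hpair.comp hm measurable_id
  have h2 : IndepFun (fun ω => g (τ ω)) U μ := hτU.comp hg measurable_id
  have hgU : Integrable (fun ω => g (τ ω) * U ω) μ := h2.integrable_mul hgi hUi
  have hgUm : AEStronglyMeasurable (fun ω => g (τ ω) * U ω) μ :=
    ((hg.comp hτm).mul hUm).aestronglyMeasurable
  constructor
  · exact h1.integrable_mul hgU hVi
  · rw [show (∫ ω, g (τ ω) * U ω * V ω ∂μ) = ∫ ω, (g (τ ω) * U ω) * V ω ∂μ from rfl,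
      h1.integral_fun_mul_eq_mul_integral hgUm hVm.aestronglyMeasurable,
      h2.integral_fun_mul_eq_mul_integral (hg.comp hτm).aestronglyMeasurable hUm.aestronglyMeasurable]

lemma aux_expMeasure_eq : expMeasure 2 =
    volume.withDensity (fun x => ((exponentialPDFReal 2 x).toNNReal : ℝ≥0∞)) := rfl

lemma aux_exp (g : ℝ → ℝ) (hg : Measurable g) (hg0 : g 0 = 0)
    (hint : IntegrableOn (fun x => 2 * Real.exp (-(2*x)) * g x) (Set.Ioi 0)) :
    Integrable g (expMeasure 2) ∧
      ∫ x, g x ∂(expMeasure 2) = ∫ x in Set.Ioi (0:ℝ), 2 * Real.exp (-(2*x)) * g x := by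
  have hpdfm : Measurable fun x => (exponentialPDFReal 2 x).toNNReal :=
    (measurable_exponentialPDFReal 2).real_toNNReal
  have hval : ∀ x : ℝ, (exponentialPDFReal 2 x).toNNReal • g x
      = Set.indicator (Set.Ioi (0:ℝ)) (fun x => 2 * Real.exp (-(2*x)) * g x) x := by
    intro x
    rcases lt_trichotomy x 0 with hx | rfl | hx
    · simp [Set.indicator_of_notMem (by simpa using hx.not_gt : x ∉ Set.Ioi (0:ℝ)),
        exponentialPDFReal, gammaPDFReal, if_neg (not_le.mpr hx)]
    · simp [hg0]
    · rw [Set.indicator_of_mem (by simpa using hx)]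
      have h2 : exponentialPDFReal 2 x = 2 * Real.exp (-(2*x)) := by
        simp [exponentialPDFReal, gammaPDFReal, if_pos hx.le]
      rw [NNReal.smul_def, Real.coe_toNNReal _ (exponentialPDFReal_nonneg (by norm_num) x),
        h2, smul_eq_mul]
  constructor
  · rw [aux_expMeasure_eq, integrable_withDensity_iff_integrable_smul hpdfm]
    have := hint.integrable_indicator measurableSet_Ioi
    exact this.congr (Filter.Eventually.of_forall fun x => (hval x).symm)
  · rw [aux_expMeasure_eq, integral_withDensity_eq_integral_smul hpdfm]
    rw [integral_congr_ae (Filter.Eventually.of_forall hval)]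
    exact integral_indicator measurableSet_Ioi

lemma aux_base1 : IntegrableOn (fun x : ℝ => x * Real.exp (-(2*x))) (Ioi 0) := by
  have := integrableOn_rpow_mul_exp_neg_mul_rpow (by norm_num : (-1:ℝ) < 1) (by norm_num : (0:ℝ) < 1)
    (by norm_num : (0:ℝ) < 2)
  simpa [Real.rpow_one, neg_mul] using this

lemma aux_base2 : IntegrableOn (fun x : ℝ => x ^ 2 * Real.exp (-(2*x))) (Ioi 0) := by
  have := integrableOn_rpow_mul_exp_neg_mul_rpow (by norm_num : (-1:ℝ) < 2) (by norm_num : (0:ℝ) < 1)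
    (by norm_num : (0:ℝ) < 2)
  have h2 : ∀ x : ℝ, x ^ (2:ℝ) = x ^ (2:ℕ) := fun x => by
    rw [show (2:ℝ) = ((2:ℕ):ℝ) by norm_num, Real.rpow_natCast]
  simp only [Real.rpow_one, neg_mul, h2] at this
  exact this

lemma aux_exp_moment1 : Integrable (fun x : ℝ => x) (expMeasure 2) ∧
    ∫ x, x ∂(expMeasure 2) = 1/2 := by
  have hint : IntegrableOn (fun x : ℝ => 2 * Real.exp (-(2*x)) * x) (Set.Ioi 0) := by
    refine (aux_base1.const_mul 2).congr ?_
    refine Filter.Eventually.of_forall fun x => ?_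
    ring
  obtain ⟨hi, he⟩ := aux_exp (fun x => x) measurable_id rfl hint
  refine ⟨hi, ?_⟩
  rw [he]
  have h1 : ∫ x in Ioi (0:ℝ), 2 * Real.exp (-(2*x)) * x
      = 2 * ∫ x in Ioi (0:ℝ), x ^ ((2:ℝ)-1) * Real.exp (-(2*x)) := by
    rw [← MeasureTheory.integral_const_mul]
    refine setIntegral_congr_fun measurableSet_Ioi fun x _ => ?_
    norm_num [Real.rpow_one]
    ring
  have p2 : ((1:ℝ)/2) ^ (2:ℝ) = 1/4 := by
    rw [show (2:ℝ) = ((2:ℕ):ℝ) by norm_num, Real.rpow_natCast]; norm_num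
  rw [h1, integral_rpow_mul_exp_neg_mul_Ioi (by norm_num : (0:ℝ) < 2) (by norm_num : (0:ℝ) < 2),
    p2, Real.Gamma_two]
  norm_num

lemma aux_exp_moment2 : Integrable (fun x : ℝ => x ^ 2) (expMeasure 2) ∧
    ∫ x, x ^ 2 ∂(expMeasure 2) = 1/2 := by
  have hint : IntegrableOn (fun x : ℝ => 2 * Real.exp (-(2*x)) * x ^ 2) (Set.Ioi 0) := by
    refine (aux_base2.const_mul 2).congr ?_
    refine Filter.Eventually.of_forall fun x => ?_
    ring
  obtain ⟨hi, he⟩ := aux_exp (fun x => x ^ 2) (measurable_id.pow_const 2) (by norm_num) hint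
  refine ⟨hi, ?_⟩
  rw [he]
  have h1 : ∫ x in Ioi (0:ℝ), 2 * Real.exp (-(2*x)) * x ^ 2
      = 2 * ∫ x in Ioi (0:ℝ), x ^ ((3:ℝ)-1) * Real.exp (-(2*x)) := by
    rw [← MeasureTheory.integral_const_mul]
    refine setIntegral_congr_fun measurableSet_Ioi fun x _ => ?_
    have : x ^ ((3:ℝ)-1) = x ^ (2:ℕ) := by
      rw [show (3:ℝ)-1 = ((2:ℕ):ℝ) by norm_num, Real.rpow_natCast]
    rw [this]; ring
  have p3 : ((1:ℝ)/2) ^ (3:ℝ) = 1/8 := by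
    rw [show (3:ℝ) = ((3:ℕ):ℝ) by norm_num, Real.rpow_natCast]; norm_num
  have g3 : Real.Gamma 3 = 2 := by
    have := Real.Gamma_nat_eq_factorial 2
    norm_num at this
    convert this using 2 <;> norm_num
  rw [h1, integral_rpow_mul_exp_neg_mul_Ioi (by norm_num : (0:ℝ) < 3) (by norm_num : (0:ℝ) < 2),
    p3, g3]
  norm_num

lemma aux_poly (a b c d e : ℝ) :
    ∫ x in (0:ℝ)..1, (a + b*x + c*x^2 + d*x^3 + e*x^4) = a + b/2 + c/3 + d/4 + e/5 := by
  have key : ∀ x ∈ Set.uIcc (0:ℝ) 1, HasDerivAt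
      (fun x : ℝ => a*x^1 + b/2*x^2 + c/3*x^3 + d/4*x^4 + e/5*x^5)
      (a + b*x + c*x^2 + d*x^3 + e*x^4) x := by
    intro x _
    have h := ((((((hasDerivAt_pow 1 x).const_mul a).add ((hasDerivAt_pow 2 x).const_mul (b/2))).add
        ((hasDerivAt_pow 3 x).const_mul (c/3))).add ((hasDerivAt_pow 4 x).const_mul (d/4))).add
        ((hasDerivAt_pow 5 x).const_mul (e/5)))
    refine (h.congr_deriv (by push_cast; ring)).congr_of_eventuallyEq
      (Filter.Eventually.of_forall fun y => rfl)
  rw [intervalIntegral.integral_eq_sub_of_hasDerivAt key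
    ((Continuous.intervalIntegrable (by fun_prop) _ _))]
  norm_num

lemma aux_unif' {τ : Ω → ℝ}
    (hτm : Measurable τ) (hτ : μ.map τ = volume.restrict (Set.Icc (0:ℝ) 1))
    (g : ℝ → ℝ) (hg : Continuous g) (a b c d e : ℝ)
    (hrep : ∀ x, g x = a + b*x + c*x^2 + d*x^3 + e*x^4) :
    Integrable (fun ω => g (τ ω)) μ ∧ ∫ ω, g (τ ω) ∂μ = a + b/2 + c/3 + d/4 + e/5 := by
  have h1 : Integrable g (μ.map τ) := by
    rw [hτ]; exact hg.integrableOn_Icc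
  refine ⟨(integrable_map_measure hg.aestronglyMeasurable hτm.aemeasurable).mp h1, ?_⟩
  rw [← integral_map hτm.aemeasurable hg.aestronglyMeasurable, hτ,
    integral_Icc_eq_integral_Ioc, ← intervalIntegral.integral_of_le zero_le_one]
  simp_rw [hrep]
  exact aux_poly a b c d e

end Aux

set_option maxHeartbeats 1000000 in
/-- The fixed point of the contraction characterizing the limit of the centered,
`n²`-normalized continuous cophenetic index of a Yule tree has mean `0` and
variance `1/16`. -/
theorem stmt19 {Ω : Type*} [MeasurableSpace Ω] (μ : Measure Ω) [IsProbabilityMeasure μ]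
    (Y Y' Y'' τ T T' : Ω → ℝ)
    (hY' : IdentDistrib Y' Y μ μ) (hY'' : IdentDistrib Y'' Y μ μ)
    (hindep : iIndepFun ![Y', Y'', τ, T, T'] μ)
    (hτ : μ.map τ = volume.restrict (Set.Icc (0 : ℝ) 1))
    (hT : μ.map T = expMeasure 2) (hT' : μ.map T' = expMeasure 2)
    (hY2 : MemLp Y 2 μ)
    (hfix : IdentDistrib Y
      (fun ω => τ ω ^ 2 * Y' ω + (1 - τ ω) ^ 2 * Y'' ω +
        (1 / 2) * τ ω ^ 2 * T ω + (1 / 2) * (1 - τ ω) ^ 2 * T' ω - τ ω * (1 - τ ω)) μ μ) :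
    (∫ ω, Y ω ∂μ = 0) ∧ variance Y μ = 1 / 16 := by
  classical
  -- a.e.-measurability of all the random variables
  have hτa : AEMeasurable τ μ := by
    by_contra h
    have h0 := Measure.map_of_not_aemeasurable h
    have h1 : (volume.restrict (Set.Icc (0:ℝ) 1)) Set.univ = 1 := by
      simp [Real.volume_Icc]
    rw [← hτ, h0] at h1
    simp at h1
  have hPexp : IsProbabilityMeasure (expMeasure 2) :=
    isProbabilityMeasure_expMeasure (by norm_num)
  have hTa : AEMeasurable T μ := by
    by_contra h
    have h0 := Measure.map_of_not_aemeasurable h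
    have h1 : (expMeasure 2) Set.univ = 1 := measure_univ
    rw [← hT, h0] at h1
    simp at h1
  have hT'a : AEMeasurable T' μ := by
    by_contra h
    have h0 := Measure.map_of_not_aemeasurable h
    have h1 : (expMeasure 2) Set.univ = 1 := measure_univ
    rw [← hT', h0] at h1
    simp at h1
  have hY'a : AEMeasurable Y' μ := hY'.aemeasurable_fst
  have hY''a : AEMeasurable Y'' μ := hY''.aemeasurable_fst
  -- measurable representatives
  obtain ⟨τ₀, hτ₀m, hτ₀e⟩ : ∃ f, Measurable f ∧ τ =ᵐ[μ] f :=
    ⟨hτa.mk τ, hτa.measurable_mk, hτa.ae_eq_mk⟩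
  obtain ⟨T₀, hT₀m, hT₀e⟩ : ∃ f, Measurable f ∧ T =ᵐ[μ] f :=
    ⟨hTa.mk T, hTa.measurable_mk, hTa.ae_eq_mk⟩
  obtain ⟨T₀', hT₀'m, hT₀'e⟩ : ∃ f, Measurable f ∧ T' =ᵐ[μ] f :=
    ⟨hT'a.mk T', hT'a.measurable_mk, hT'a.ae_eq_mk⟩
  obtain ⟨Y₀', hY₀'m, hY₀'e⟩ : ∃ f, Measurable f ∧ Y' =ᵐ[μ] f :=
    ⟨hY'a.mk Y', hY'a.measurable_mk, hY'a.ae_eq_mk⟩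
  obtain ⟨Y₀'', hY₀''m, hY₀''e⟩ : ∃ f, Measurable f ∧ Y'' =ᵐ[μ] f :=
    ⟨hY''a.mk Y'', hY''a.measurable_mk, hY''a.ae_eq_mk⟩
  -- transferred hypotheses
  have hτ₀ : μ.map τ₀ = volume.restrict (Set.Icc (0:ℝ) 1) :=
    (Measure.map_congr hτ₀e).symm.trans hτ
  have hT₀ : μ.map T₀ = expMeasure 2 := (Measure.map_congr hT₀e).symm.trans hT
  have hT₀' : μ.map T₀' = expMeasure 2 := (Measure.map_congr hT₀'e).symm.trans hT'
  have hY'i : IdentDistrib Y₀' Y μ μ :=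
    (IdentDistrib.of_ae_eq hY'a hY₀'e).symm.trans hY'
  have hY''i : IdentDistrib Y₀'' Y μ μ :=
    (IdentDistrib.of_ae_eq hY''a hY₀''e).symm.trans hY''
  have hindep₀ : iIndepFun ![Y₀', Y₀'', τ₀, T₀, T₀'] μ := by
    refine aux_iIndepFun_congr (f := ![Y', Y'', τ, T, T']) ?_ hindep
    intro i
    fin_cases i
    · exact hY₀'e
    · exact hY₀''e
    · exact hτ₀e
    · exact hT₀e
    · exact hT₀'e
  have hXm : ∀ i, Measurable (![Y₀', Y₀'', τ₀, T₀, T₀'] i) := by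
    intro i
    fin_cases i
    · exact hY₀'m
    · exact hY₀''m
    · exact hτ₀m
    · exact hT₀m
    · exact hT₀'m
  have hfix₀ : IdentDistrib Y
      (fun ω => τ₀ ω ^ 2 * Y₀' ω + (1 - τ₀ ω) ^ 2 * Y₀'' ω +
        1/2 * τ₀ ω ^ 2 * T₀ ω + 1/2 * (1 - τ₀ ω) ^ 2 * T₀' ω - τ₀ ω * (1 - τ₀ ω)) μ μ := by
    have h1 : AEMeasurable (fun ω => (1:ℝ) - τ ω) μ := aemeasurable_const.sub hτa
    have hAae : AEMeasurable (fun ω => τ ω ^ 2 * Y' ω + (1 - τ ω) ^ 2 * Y'' ω +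
        (1 / 2) * τ ω ^ 2 * T ω + (1 / 2) * (1 - τ ω) ^ 2 * T' ω - τ ω * (1 - τ ω)) μ :=
      (((((hτa.pow_const 2).mul hY'a).add ((h1.pow_const 2).mul hY''a)).add
        ((aemeasurable_const.mul (hτa.pow_const 2)).mul hTa)).add
          ((aemeasurable_const.mul (h1.pow_const 2)).mul hT'a)).sub (hτa.mul h1)
    refine hfix.trans (IdentDistrib.of_ae_eq hAae ?_)
    filter_upwards [hτ₀e, hT₀e, hT₀'e, hY₀'e, hY₀''e] with ω e1 e2 e3 e4 e5
    rw [e1, e2, e3, e4, e5]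
  -- independence facts
  have iP0 : IndepFun τ₀ Y₀' μ := hindep₀.indepFun (i := 2) (j := 0) (by decide)
  have iP1 : IndepFun τ₀ Y₀'' μ := hindep₀.indepFun (i := 2) (j := 1) (by decide)
  have iP3 : IndepFun τ₀ T₀ μ := hindep₀.indepFun (i := 2) (j := 3) (by decide)
  have iP4 : IndepFun τ₀ T₀' μ := hindep₀.indepFun (i := 2) (j := 4) (by decide)
  have iT01 : IndepFun (fun ω => (τ₀ ω, Y₀' ω)) Y₀'' μ :=
    hindep₀.indepFun_prodMk hXm 2 0 1 (by decide) (by decide)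
  have iT03 : IndepFun (fun ω => (τ₀ ω, Y₀' ω)) T₀ μ :=
    hindep₀.indepFun_prodMk hXm 2 0 3 (by decide) (by decide)
  have iT04 : IndepFun (fun ω => (τ₀ ω, Y₀' ω)) T₀' μ :=
    hindep₀.indepFun_prodMk hXm 2 0 4 (by decide) (by decide)
  have iT13 : IndepFun (fun ω => (τ₀ ω, Y₀'' ω)) T₀ μ :=
    hindep₀.indepFun_prodMk hXm 2 1 3 (by decide) (by decide)
  have iT14 : IndepFun (fun ω => (τ₀ ω, Y₀'' ω)) T₀' μ :=
    hindep₀.indepFun_prodMk hXm 2 1 4 (by decide) (by decide)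
  have iT34 : IndepFun (fun ω => (τ₀ ω, T₀ ω)) T₀' μ :=
    hindep₀.indepFun_prodMk hXm 2 3 4 (by decide) (by decide)
  -- moments of τ₀
  have u1 := aux_unif' hτ₀m hτ₀ (fun x => x^2) (by fun_prop) 0 0 1 0 0 (fun x => by ring)
  have u1v : ∫ ω, τ₀ ω ^ 2 ∂μ = 1/3 := by have h := u1.2; norm_num at h; exact h
  have u2 := aux_unif' hτ₀m hτ₀ (fun x => (1-x)^2) (by fun_prop) 1 (-2) 1 0 0 (fun x => by ring)
  have u2v : ∫ ω, (1 - τ₀ ω) ^ 2 ∂μ = 1/3 := by have h := u2.2; norm_num at h; exact h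
  have u3 := aux_unif' hτ₀m hτ₀ (fun x => 1/2*x^2) (by fun_prop) 0 0 (1/2) 0 0 (fun x => by ring)
  have u3v : ∫ ω, 1/2 * τ₀ ω ^ 2 ∂μ = 1/6 := by have h := u3.2; norm_num at h; exact h
  have u4 := aux_unif' hτ₀m hτ₀ (fun x => 1/2*(1-x)^2) (by fun_prop) (1/2) (-1) (1/2) 0 0
    (fun x => by ring)
  have u4v : ∫ ω, 1/2 * (1 - τ₀ ω) ^ 2 ∂μ = 1/6 := by have h := u4.2; norm_num at h; exact h
  have u5 := aux_unif' hτ₀m hτ₀ (fun x => x*(1-x)) (by fun_prop) 0 1 (-1) 0 0 (fun x => by ring)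
  have u5v : ∫ ω, τ₀ ω * (1 - τ₀ ω) ∂μ = 1/6 := by have h := u5.2; norm_num at h; exact h
  have u6 := aux_unif' hτ₀m hτ₀ (fun x => x^4) (by fun_prop) 0 0 0 0 1 (fun x => by ring)
  have u6v : ∫ ω, τ₀ ω ^ 4 ∂μ = 1/5 := by have h := u6.2; norm_num at h; exact h
  have u7 := aux_unif' hτ₀m hτ₀ (fun x => (1-x)^4) (by fun_prop) 1 (-4) 6 (-4) 1
    (fun x => by ring)
  have u7v : ∫ ω, (1 - τ₀ ω) ^ 4 ∂μ = 1/5 := by have h := u7.2; norm_num at h; exact h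
  have u8 := aux_unif' hτ₀m hτ₀ (fun x => 1/4*x^4) (by fun_prop) 0 0 0 0 (1/4) (fun x => by ring)
  have u8v : ∫ ω, 1/4 * τ₀ ω ^ 4 ∂μ = 1/20 := by have h := u8.2; norm_num at h; exact h
  have u9 := aux_unif' hτ₀m hτ₀ (fun x => 1/4*(1-x)^4) (by fun_prop) (1/4) (-1) (3/2) (-1) (1/4)
    (fun x => by ring)
  have u9v : ∫ ω, 1/4 * (1 - τ₀ ω) ^ 4 ∂μ = 1/20 := by have h := u9.2; norm_num at h; exact h
  have u10 := aux_unif' hτ₀m hτ₀ (fun x => x^2*(1-x)^2) (by fun_prop) 0 0 1 (-2) 1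
    (fun x => by ring)
  have u10v : ∫ ω, τ₀ ω ^ 2 * (1 - τ₀ ω) ^ 2 ∂μ = 1/30 := by
    have h := u10.2; norm_num at h; exact h
  have u11 := aux_unif' hτ₀m hτ₀ (fun x => 2*(x^2*(1-x)^2)) (by fun_prop) 0 0 2 (-4) 2
    (fun x => by ring)
  have u11v : ∫ ω, 2 * (τ₀ ω ^ 2 * (1 - τ₀ ω) ^ 2) ∂μ = 1/15 := by
    have h := u11.2; norm_num at h; exact h
  have u12 := aux_unif' hτ₀m hτ₀ (fun x => -2*(x^3*(1-x))) (by fun_prop) 0 0 0 (-2) 2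
    (fun x => by ring)
  have u12v : ∫ ω, -2 * (τ₀ ω ^ 3 * (1 - τ₀ ω)) ∂μ = -(1/10) := by
    have h := u12.2; norm_num at h; linarith
  have u13 := aux_unif' hτ₀m hτ₀ (fun x => -2*(x*(1-x)^3)) (by fun_prop) 0 (-2) 6 (-6) 2
    (fun x => by ring)
  have u13v : ∫ ω, -2 * (τ₀ ω * (1 - τ₀ ω) ^ 3) ∂μ = -(1/10) := by
    have h := u13.2; norm_num at h; linarith
  have u14 := aux_unif' hτ₀m hτ₀ (fun x => 1/2*(x^2*(1-x)^2)) (by fun_prop) 0 0 (1/2) (-1) (1/2)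
    (fun x => by ring)
  have u14v : ∫ ω, 1/2 * (τ₀ ω ^ 2 * (1 - τ₀ ω) ^ 2) ∂μ = 1/60 := by
    have h := u14.2; norm_num at h; exact h
  have u15 := aux_unif' hτ₀m hτ₀ (fun x => -(x^3*(1-x))) (by fun_prop) 0 0 0 (-1) 1
    (fun x => by ring)
  have u15v : ∫ ω, -(τ₀ ω ^ 3 * (1 - τ₀ ω)) ∂μ = -(1/20) := by
    have h := u15.2; norm_num at h; linarith
  have u16 := aux_unif' hτ₀m hτ₀ (fun x => -(x*(1-x)^3)) (by fun_prop) 0 (-1) 3 (-3) 1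
    (fun x => by ring)
  have u16v : ∫ ω, -(τ₀ ω * (1 - τ₀ ω) ^ 3) ∂μ = -(1/20) := by
    have h := u16.2; norm_num at h; linarith
  -- moments of T₀, T₀'
  have hTint : Integrable T₀ μ := by
    have h := (integrable_map_measure measurable_id.aestronglyMeasurable
      hT₀m.aemeasurable).mp (by rw [hT₀]; exact aux_exp_moment1.1)
    exact h
  have hT'int : Integrable T₀' μ := by
    have h := (integrable_map_measure measurable_id.aestronglyMeasurable
      hT₀'m.aemeasurable).mp (by rw [hT₀']; exact aux_exp_moment1.1)
    exact h
  have hT2int : Integrable (fun ω => T₀ ω ^ 2) μ := by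
    have h := (integrable_map_measure (measurable_id.pow_const 2).aestronglyMeasurable
      hT₀m.aemeasurable).mp (by rw [hT₀]; exact aux_exp_moment2.1)
    exact h
  have hT'2int : Integrable (fun ω => T₀' ω ^ 2) μ := by
    have h := (integrable_map_measure (measurable_id.pow_const 2).aestronglyMeasurable
      hT₀'m.aemeasurable).mp (by rw [hT₀']; exact aux_exp_moment2.1)
    exact h
  have hTv : ∫ ω, T₀ ω ∂μ = 1/2 := by
    rw [show (∫ ω, T₀ ω ∂μ) = ∫ y, y ∂(μ.map T₀) from
      (integral_map hT₀m.aemeasurable measurable_id.aestronglyMeasurable).symm, hT₀,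
      aux_exp_moment1.2]
  have hT'v : ∫ ω, T₀' ω ∂μ = 1/2 := by
    rw [show (∫ ω, T₀' ω ∂μ) = ∫ y, y ∂(μ.map T₀') from
      (integral_map hT₀'m.aemeasurable measurable_id.aestronglyMeasurable).symm, hT₀',
      aux_exp_moment1.2]
  have hT2v : ∫ ω, T₀ ω ^ 2 ∂μ = 1/2 := by
    rw [show (∫ ω, T₀ ω ^ 2 ∂μ) = ∫ y, y ^ 2 ∂(μ.map T₀) from
      (integral_map hT₀m.aemeasurable (measurable_id.pow_const 2).aestronglyMeasurable).symm,
      hT₀, aux_exp_moment2.2]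
  have hT'2v : ∫ ω, T₀' ω ^ 2 ∂μ = 1/2 := by
    rw [show (∫ ω, T₀' ω ^ 2 ∂μ) = ∫ y, y ^ 2 ∂(μ.map T₀') from
      (integral_map hT₀'m.aemeasurable (measurable_id.pow_const 2).aestronglyMeasurable).symm,
      hT₀', aux_exp_moment2.2]
  -- Y₀', Y₀'' facts
  have hY'2 : MemLp Y₀' 2 μ := hY'i.symm.memLp_snd hY2
  have hY''2 : MemLp Y₀'' 2 μ := hY''i.symm.memLp_snd hY2
  have hY'int : Integrable Y₀' μ := hY'2.integrable one_le_two
  have hY''int : Integrable Y₀'' μ := hY''2.integrable one_le_two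
  have hY'sqint : Integrable (fun ω => Y₀' ω ^ 2) μ := hY'2.integrable_sq
  have hY''sqint : Integrable (fun ω => Y₀'' ω ^ 2) μ := hY''2.integrable_sq
  have hmY' : ∫ ω, Y₀' ω ∂μ = ∫ ω, Y ω ∂μ := hY'i.integral_eq
  have hmY'' : ∫ ω, Y₀'' ω ∂μ = ∫ ω, Y ω ∂μ := hY''i.integral_eq
  have hsY' : ∫ ω, Y₀' ω ^ 2 ∂μ = ∫ ω, Y ω ^ 2 ∂μ :=
    (hY'i.comp (measurable_id.pow_const 2)).integral_eq
  have hsY'' : ∫ ω, Y₀'' ω ^ 2 ∂μ = ∫ ω, Y ω ^ 2 ∂μ :=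
    (hY''i.comp (measurable_id.pow_const 2)).integral_eq
  -- mean computation
  have pm1 := aux_pair iP0 (measurable_id.pow_const 2) measurable_id hτ₀m hY₀'m u1.1 hY'int
  have mi1 : Integrable (fun ω => τ₀ ω ^ 2 * Y₀' ω) μ := pm1.1
  have m1 : ∫ ω, τ₀ ω ^ 2 * Y₀' ω ∂μ = (∫ ω, τ₀ ω ^ 2 ∂μ) * ∫ ω, Y₀' ω ∂μ := pm1.2
  have pm2 := aux_pair iP1 ((measurable_const.sub measurable_id).pow_const 2) measurable_id
    hτ₀m hY₀''m u2.1 hY''int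
  have mi2 : Integrable (fun ω => (1 - τ₀ ω) ^ 2 * Y₀'' ω) μ := pm2.1
  have m2 : ∫ ω, (1 - τ₀ ω) ^ 2 * Y₀'' ω ∂μ = (∫ ω, (1 - τ₀ ω) ^ 2 ∂μ) * ∫ ω, Y₀'' ω ∂μ := pm2.2
  have pm3 := aux_pair iP3 (measurable_const.mul (measurable_id.pow_const 2)) measurable_id
    hτ₀m hT₀m u3.1 hTint
  have mi3 : Integrable (fun ω => 1/2 * τ₀ ω ^ 2 * T₀ ω) μ := pm3.1
  have m3 : ∫ ω, 1/2 * τ₀ ω ^ 2 * T₀ ω ∂μ = (∫ ω, 1/2 * τ₀ ω ^ 2 ∂μ) * ∫ ω, T₀ ω ∂μ := pm3.2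
  have pm4 := aux_pair iP4 (measurable_const.mul ((measurable_const.sub measurable_id).pow_const
    2)) measurable_id hτ₀m hT₀'m u4.1 hT'int
  have mi4 : Integrable (fun ω => 1/2 * (1 - τ₀ ω) ^ 2 * T₀' ω) μ := pm4.1
  have m4 : ∫ ω, 1/2 * (1 - τ₀ ω) ^ 2 * T₀' ω ∂μ
      = (∫ ω, 1/2 * (1 - τ₀ ω) ^ 2 ∂μ) * ∫ ω, T₀' ω ∂μ := pm4.2
  have mi5 : Integrable (fun ω => τ₀ ω * (1 - τ₀ ω)) μ := u5.1
  have hfixInt : ∫ ω, Y ω ∂μ = ∫ ω, (τ₀ ω ^ 2 * Y₀' ω + (1 - τ₀ ω) ^ 2 * Y₀'' ω +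
      1/2 * τ₀ ω ^ 2 * T₀ ω + 1/2 * (1 - τ₀ ω) ^ 2 * T₀' ω - τ₀ ω * (1 - τ₀ ω)) ∂μ :=
    hfix₀.integral_eq
  have hsplit : ∫ ω, (τ₀ ω ^ 2 * Y₀' ω + (1 - τ₀ ω) ^ 2 * Y₀'' ω +
      1/2 * τ₀ ω ^ 2 * T₀ ω + 1/2 * (1 - τ₀ ω) ^ 2 * T₀' ω - τ₀ ω * (1 - τ₀ ω)) ∂μ
      = ∫ ω, τ₀ ω ^ 2 * Y₀' ω ∂μ + ∫ ω, (1 - τ₀ ω) ^ 2 * Y₀'' ω ∂μ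
        + ∫ ω, 1/2 * τ₀ ω ^ 2 * T₀ ω ∂μ + ∫ ω, 1/2 * (1 - τ₀ ω) ^ 2 * T₀' ω ∂μ
        - ∫ ω, τ₀ ω * (1 - τ₀ ω) ∂μ := by
    have mi12 : Integrable (fun ω => τ₀ ω ^ 2 * Y₀' ω + (1 - τ₀ ω) ^ 2 * Y₀'' ω) μ :=
      mi1.add mi2
    have mi123 : Integrable (fun ω => τ₀ ω ^ 2 * Y₀' ω + (1 - τ₀ ω) ^ 2 * Y₀'' ω
        + 1/2 * τ₀ ω ^ 2 * T₀ ω) μ := mi12.add mi3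
    have mi1234 : Integrable (fun ω => τ₀ ω ^ 2 * Y₀' ω + (1 - τ₀ ω) ^ 2 * Y₀'' ω
        + 1/2 * τ₀ ω ^ 2 * T₀ ω + 1/2 * (1 - τ₀ ω) ^ 2 * T₀' ω) μ := mi123.add mi4
    rw [integral_sub mi1234 mi5, integral_add mi123 mi4, integral_add mi12 mi3,
      integral_add mi1 mi2]
  have hmean : ∫ ω, Y ω ∂μ = 0 := by
    have heq := hfixInt.trans hsplit
    rw [m1, m2, m3, m4, u1v, u2v, u3v, u4v, u5v, hmY', hmY'', hTv, hT'v] at heq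
    linarith
  -- second moment computation
  have pq1 := aux_pair iP0 (by fun_prop : Measurable fun x : ℝ => x^4) (measurable_id.pow_const 2) hτ₀m hY₀'m u6.1 hY'sqint
  have qi1 : Integrable (fun ω => τ₀ ω ^ 4 * Y₀' ω ^ 2) μ := pq1.1
  have q1v : ∫ ω, τ₀ ω ^ 4 * Y₀' ω ^ 2 ∂μ = (∫ ω, τ₀ ω ^ 4 ∂μ) * ∫ ω, Y₀' ω ^ 2 ∂μ := pq1.2
  have pq2 := aux_pair iP1 (by fun_prop : Measurable fun x : ℝ => (1-x)^4) (measurable_id.pow_const 2) hτ₀m hY₀''m u7.1 hY''sqint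
  have qi2 : Integrable (fun ω => (1 - τ₀ ω) ^ 4 * Y₀'' ω ^ 2) μ := pq2.1
  have q2v : ∫ ω, (1 - τ₀ ω) ^ 4 * Y₀'' ω ^ 2 ∂μ = (∫ ω, (1 - τ₀ ω) ^ 4 ∂μ) * ∫ ω, Y₀'' ω ^ 2 ∂μ := pq2.2
  have pq3 := aux_pair iP3 (by fun_prop : Measurable fun x : ℝ => 1/4*x^4) (measurable_id.pow_const 2) hτ₀m hT₀m u8.1 hT2int
  have qi3 : Integrable (fun ω => 1/4 * τ₀ ω ^ 4 * T₀ ω ^ 2) μ := pq3.1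
  have q3v : ∫ ω, 1/4 * τ₀ ω ^ 4 * T₀ ω ^ 2 ∂μ = (∫ ω, 1/4 * τ₀ ω ^ 4 ∂μ) * ∫ ω, T₀ ω ^ 2 ∂μ := pq3.2
  have pq4 := aux_pair iP4 (by fun_prop : Measurable fun x : ℝ => 1/4*(1-x)^4) (measurable_id.pow_const 2) hτ₀m hT₀'m u9.1 hT'2int
  have qi4 : Integrable (fun ω => 1/4 * (1 - τ₀ ω) ^ 4 * T₀' ω ^ 2) μ := pq4.1
  have q4v : ∫ ω, 1/4 * (1 - τ₀ ω) ^ 4 * T₀' ω ^ 2 ∂μ = (∫ ω, 1/4 * (1 - τ₀ ω) ^ 4 ∂μ) * ∫ ω, T₀' ω ^ 2 ∂μ := pq4.2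
  have qi5 : Integrable (fun ω => τ₀ ω ^ 2 * (1 - τ₀ ω) ^ 2) μ := u10.1
  have pq6 := aux_trip iT01 iP0 (by fun_prop : Measurable fun x : ℝ => 2*(x^2*(1-x)^2)) hτ₀m hY₀'m hY₀''m u11.1 hY'int hY''int
  have qi6 : Integrable (fun ω => 2 * (τ₀ ω ^ 2 * (1 - τ₀ ω) ^ 2) * Y₀' ω * Y₀'' ω) μ := pq6.1
  have q6v : ∫ ω, 2 * (τ₀ ω ^ 2 * (1 - τ₀ ω) ^ 2) * Y₀' ω * Y₀'' ω ∂μ = (∫ ω, 2 * (τ₀ ω ^ 2 * (1 - τ₀ ω) ^ 2) ∂μ) * (∫ ω, Y₀' ω ∂μ) * ∫ ω, Y₀'' ω ∂μ := pq6.2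
  have pq7 := aux_trip iT03 iP0 (by fun_prop : Measurable fun x : ℝ => x^4) hτ₀m hY₀'m hT₀m u6.1 hY'int hTint
  have qi7 : Integrable (fun ω => τ₀ ω ^ 4 * Y₀' ω * T₀ ω) μ := pq7.1
  have q7v : ∫ ω, τ₀ ω ^ 4 * Y₀' ω * T₀ ω ∂μ = (∫ ω, τ₀ ω ^ 4 ∂μ) * (∫ ω, Y₀' ω ∂μ) * ∫ ω, T₀ ω ∂μ := pq7.2
  have pq8 := aux_trip iT04 iP0 (by fun_prop : Measurable fun x : ℝ => x^2*(1-x)^2) hτ₀m hY₀'m hT₀'m u10.1 hY'int hT'int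
  have qi8 : Integrable (fun ω => τ₀ ω ^ 2 * (1 - τ₀ ω) ^ 2 * Y₀' ω * T₀' ω) μ := pq8.1
  have q8v : ∫ ω, τ₀ ω ^ 2 * (1 - τ₀ ω) ^ 2 * Y₀' ω * T₀' ω ∂μ = (∫ ω, τ₀ ω ^ 2 * (1 - τ₀ ω) ^ 2 ∂μ) * (∫ ω, Y₀' ω ∂μ) * ∫ ω, T₀' ω ∂μ := pq8.2
  have pq9 := aux_pair iP0 (by fun_prop : Measurable fun x : ℝ => -2*(x^3*(1-x))) measurable_id hτ₀m hY₀'m u12.1 hY'int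
  have qi9 : Integrable (fun ω => -2 * (τ₀ ω ^ 3 * (1 - τ₀ ω)) * Y₀' ω) μ := pq9.1
  have q9v : ∫ ω, -2 * (τ₀ ω ^ 3 * (1 - τ₀ ω)) * Y₀' ω ∂μ = (∫ ω, -2 * (τ₀ ω ^ 3 * (1 - τ₀ ω)) ∂μ) * ∫ ω, Y₀' ω ∂μ := pq9.2
  have pq10 := aux_trip iT13 iP1 (by fun_prop : Measurable fun x : ℝ => x^2*(1-x)^2) hτ₀m hY₀''m hT₀m u10.1 hY''int hTint
  have qi10 : Integrable (fun ω => τ₀ ω ^ 2 * (1 - τ₀ ω) ^ 2 * Y₀'' ω * T₀ ω) μ := pq10.1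
  have q10v : ∫ ω, τ₀ ω ^ 2 * (1 - τ₀ ω) ^ 2 * Y₀'' ω * T₀ ω ∂μ = (∫ ω, τ₀ ω ^ 2 * (1 - τ₀ ω) ^ 2 ∂μ) * (∫ ω, Y₀'' ω ∂μ) * ∫ ω, T₀ ω ∂μ := pq10.2
  have pq11 := aux_trip iT14 iP1 (by fun_prop : Measurable fun x : ℝ => (1-x)^4) hτ₀m hY₀''m hT₀'m u7.1 hY''int hT'int
  have qi11 : Integrable (fun ω => (1 - τ₀ ω) ^ 4 * Y₀'' ω * T₀' ω) μ := pq11.1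
  have q11v : ∫ ω, (1 - τ₀ ω) ^ 4 * Y₀'' ω * T₀' ω ∂μ = (∫ ω, (1 - τ₀ ω) ^ 4 ∂μ) * (∫ ω, Y₀'' ω ∂μ) * ∫ ω, T₀' ω ∂μ := pq11.2
  have pq12 := aux_pair iP1 (by fun_prop : Measurable fun x : ℝ => -2*(x*(1-x)^3)) measurable_id hτ₀m hY₀''m u13.1 hY''int
  have qi12 : Integrable (fun ω => -2 * (τ₀ ω * (1 - τ₀ ω) ^ 3) * Y₀'' ω) μ := pq12.1
  have q12v : ∫ ω, -2 * (τ₀ ω * (1 - τ₀ ω) ^ 3) * Y₀'' ω ∂μ = (∫ ω, -2 * (τ₀ ω * (1 - τ₀ ω) ^ 3) ∂μ) * ∫ ω, Y₀'' ω ∂μ := pq12.2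
  have pq13 := aux_trip iT34 iP3 (by fun_prop : Measurable fun x : ℝ => 1/2*(x^2*(1-x)^2)) hτ₀m hT₀m hT₀'m u14.1 hTint hT'int
  have qi13 : Integrable (fun ω => 1/2 * (τ₀ ω ^ 2 * (1 - τ₀ ω) ^ 2) * T₀ ω * T₀' ω) μ := pq13.1
  have q13v : ∫ ω, 1/2 * (τ₀ ω ^ 2 * (1 - τ₀ ω) ^ 2) * T₀ ω * T₀' ω ∂μ = (∫ ω, 1/2 * (τ₀ ω ^ 2 * (1 - τ₀ ω) ^ 2) ∂μ) * (∫ ω, T₀ ω ∂μ) * ∫ ω, T₀' ω ∂μ := pq13.2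
  have pq14 := aux_pair iP3 (by fun_prop : Measurable fun x : ℝ => -(x^3*(1-x))) measurable_id hτ₀m hT₀m u15.1 hTint
  have qi14 : Integrable (fun ω => -(τ₀ ω ^ 3 * (1 - τ₀ ω)) * T₀ ω) μ := pq14.1
  have q14v : ∫ ω, -(τ₀ ω ^ 3 * (1 - τ₀ ω)) * T₀ ω ∂μ = (∫ ω, -(τ₀ ω ^ 3 * (1 - τ₀ ω)) ∂μ) * ∫ ω, T₀ ω ∂μ := pq14.2
  have pq15 := aux_pair iP4 (by fun_prop : Measurable fun x : ℝ => -(x*(1-x)^3)) measurable_id hτ₀m hT₀'m u16.1 hT'int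
  have qi15 : Integrable (fun ω => -(τ₀ ω * (1 - τ₀ ω) ^ 3) * T₀' ω) μ := pq15.1
  have q15v : ∫ ω, -(τ₀ ω * (1 - τ₀ ω) ^ 3) * T₀' ω ∂μ = (∫ ω, -(τ₀ ω * (1 - τ₀ ω) ^ 3) ∂μ) * ∫ ω, T₀' ω ∂μ := pq15.2
  have ci2 : Integrable (fun ω => τ₀ ω ^ 4 * Y₀' ω ^ 2 + (1 - τ₀ ω) ^ 4 * Y₀'' ω ^ 2) μ := qi1.add qi2
  have ci3 : Integrable (fun ω => τ₀ ω ^ 4 * Y₀' ω ^ 2 + (1 - τ₀ ω) ^ 4 * Y₀'' ω ^ 2 + 1/4 * τ₀ ω ^ 4 * T₀ ω ^ 2) μ := ci2.add qi3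
  have ci4 : Integrable (fun ω => τ₀ ω ^ 4 * Y₀' ω ^ 2 + (1 - τ₀ ω) ^ 4 * Y₀'' ω ^ 2 + 1/4 * τ₀ ω ^ 4 * T₀ ω ^ 2 + 1/4 * (1 - τ₀ ω) ^ 4 * T₀' ω ^ 2) μ := ci3.add qi4
  have ci5 : Integrable (fun ω => τ₀ ω ^ 4 * Y₀' ω ^ 2 + (1 - τ₀ ω) ^ 4 * Y₀'' ω ^ 2 + 1/4 * τ₀ ω ^ 4 * T₀ ω ^ 2 + 1/4 * (1 - τ₀ ω) ^ 4 * T₀' ω ^ 2 + τ₀ ω ^ 2 * (1 - τ₀ ω) ^ 2) μ := ci4.add qi5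
  have ci6 : Integrable (fun ω => τ₀ ω ^ 4 * Y₀' ω ^ 2 + (1 - τ₀ ω) ^ 4 * Y₀'' ω ^ 2 + 1/4 * τ₀ ω ^ 4 * T₀ ω ^ 2 + 1/4 * (1 - τ₀ ω) ^ 4 * T₀' ω ^ 2 + τ₀ ω ^ 2 * (1 - τ₀ ω) ^ 2 + 2 * (τ₀ ω ^ 2 * (1 - τ₀ ω) ^ 2) * Y₀' ω * Y₀'' ω) μ := ci5.add qi6
  have ci7 : Integrable (fun ω => τ₀ ω ^ 4 * Y₀' ω ^ 2 + (1 - τ₀ ω) ^ 4 * Y₀'' ω ^ 2 + 1/4 * τ₀ ω ^ 4 * T₀ ω ^ 2 + 1/4 * (1 - τ₀ ω) ^ 4 * T₀' ω ^ 2 + τ₀ ω ^ 2 * (1 - τ₀ ω) ^ 2 + 2 * (τ₀ ω ^ 2 * (1 - τ₀ ω) ^ 2) * Y₀' ω * Y₀'' ω + τ₀ ω ^ 4 * Y₀' ω * T₀ ω) μ := ci6.add qi7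
  have ci8 : Integrable (fun ω => τ₀ ω ^ 4 * Y₀' ω ^ 2 + (1 - τ₀ ω) ^ 4 * Y₀'' ω ^ 2 + 1/4 * τ₀ ω ^ 4 * T₀ ω ^ 2 + 1/4 * (1 - τ₀ ω) ^ 4 * T₀' ω ^ 2 + τ₀ ω ^ 2 * (1 - τ₀ ω) ^ 2 + 2 * (τ₀ ω ^ 2 * (1 - τ₀ ω) ^ 2) * Y₀' ω * Y₀'' ω + τ₀ ω ^ 4 * Y₀' ω * T₀ ω + τ₀ ω ^ 2 * (1 - τ₀ ω) ^ 2 * Y₀' ω * T₀' ω) μ := ci7.add qi8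
  have ci9 : Integrable (fun ω => τ₀ ω ^ 4 * Y₀' ω ^ 2 + (1 - τ₀ ω) ^ 4 * Y₀'' ω ^ 2 + 1/4 * τ₀ ω ^ 4 * T₀ ω ^ 2 + 1/4 * (1 - τ₀ ω) ^ 4 * T₀' ω ^ 2 + τ₀ ω ^ 2 * (1 - τ₀ ω) ^ 2 + 2 * (τ₀ ω ^ 2 * (1 - τ₀ ω) ^ 2) * Y₀' ω * Y₀'' ω + τ₀ ω ^ 4 * Y₀' ω * T₀ ω + τ₀ ω ^ 2 * (1 - τ₀ ω) ^ 2 * Y₀' ω * T₀' ω + -2 * (τ₀ ω ^ 3 * (1 - τ₀ ω)) * Y₀' ω) μ := ci8.add qi9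
  have ci10 : Integrable (fun ω => τ₀ ω ^ 4 * Y₀' ω ^ 2 + (1 - τ₀ ω) ^ 4 * Y₀'' ω ^ 2 + 1/4 * τ₀ ω ^ 4 * T₀ ω ^ 2 + 1/4 * (1 - τ₀ ω) ^ 4 * T₀' ω ^ 2 + τ₀ ω ^ 2 * (1 - τ₀ ω) ^ 2 + 2 * (τ₀ ω ^ 2 * (1 - τ₀ ω) ^ 2) * Y₀' ω * Y₀'' ω + τ₀ ω ^ 4 * Y₀' ω * T₀ ω + τ₀ ω ^ 2 * (1 - τ₀ ω) ^ 2 * Y₀' ω * T₀' ω + -2 * (τ₀ ω ^ 3 * (1 - τ₀ ω)) * Y₀' ω + τ₀ ω ^ 2 * (1 - τ₀ ω) ^ 2 * Y₀'' ω * T₀ ω) μ := ci9.add qi10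
  have ci11 : Integrable (fun ω => τ₀ ω ^ 4 * Y₀' ω ^ 2 + (1 - τ₀ ω) ^ 4 * Y₀'' ω ^ 2 + 1/4 * τ₀ ω ^ 4 * T₀ ω ^ 2 + 1/4 * (1 - τ₀ ω) ^ 4 * T₀' ω ^ 2 + τ₀ ω ^ 2 * (1 - τ₀ ω) ^ 2 + 2 * (τ₀ ω ^ 2 * (1 - τ₀ ω) ^ 2) * Y₀' ω * Y₀'' ω + τ₀ ω ^ 4 * Y₀' ω * T₀ ω + τ₀ ω ^ 2 * (1 - τ₀ ω) ^ 2 * Y₀' ω * T₀' ω + -2 * (τ₀ ω ^ 3 * (1 - τ₀ ω)) * Y₀' ω + τ₀ ω ^ 2 * (1 - τ₀ ω) ^ 2 * Y₀'' ω * T₀ ω + (1 - τ₀ ω) ^ 4 * Y₀'' ω * T₀' ω) μ := ci10.add qi11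
  have ci12 : Integrable (fun ω => τ₀ ω ^ 4 * Y₀' ω ^ 2 + (1 - τ₀ ω) ^ 4 * Y₀'' ω ^ 2 + 1/4 * τ₀ ω ^ 4 * T₀ ω ^ 2 + 1/4 * (1 - τ₀ ω) ^ 4 * T₀' ω ^ 2 + τ₀ ω ^ 2 * (1 - τ₀ ω) ^ 2 + 2 * (τ₀ ω ^ 2 * (1 - τ₀ ω) ^ 2) * Y₀' ω * Y₀'' ω + τ₀ ω ^ 4 * Y₀' ω * T₀ ω + τ₀ ω ^ 2 * (1 - τ₀ ω) ^ 2 * Y₀' ω * T₀' ω + -2 * (τ₀ ω ^ 3 * (1 - τ₀ ω)) * Y₀' ω + τ₀ ω ^ 2 * (1 - τ₀ ω) ^ 2 * Y₀'' ω * T₀ ω + (1 - τ₀ ω) ^ 4 * Y₀'' ω * T₀' ω + -2 * (τ₀ ω * (1 - τ₀ ω) ^ 3) * Y₀'' ω) μ := ci11.add qi12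
  have ci13 : Integrable (fun ω => τ₀ ω ^ 4 * Y₀' ω ^ 2 + (1 - τ₀ ω) ^ 4 * Y₀'' ω ^ 2 + 1/4 * τ₀ ω ^ 4 * T₀ ω ^ 2 + 1/4 * (1 - τ₀ ω) ^ 4 * T₀' ω ^ 2 + τ₀ ω ^ 2 * (1 - τ₀ ω) ^ 2 + 2 * (τ₀ ω ^ 2 * (1 - τ₀ ω) ^ 2) * Y₀' ω * Y₀'' ω + τ₀ ω ^ 4 * Y₀' ω * T₀ ω + τ₀ ω ^ 2 * (1 - τ₀ ω) ^ 2 * Y₀' ω * T₀' ω + -2 * (τ₀ ω ^ 3 * (1 - τ₀ ω)) * Y₀' ω + τ₀ ω ^ 2 * (1 - τ₀ ω) ^ 2 * Y₀'' ω * T₀ ω + (1 - τ₀ ω) ^ 4 * Y₀'' ω * T₀' ω + -2 * (τ₀ ω * (1 - τ₀ ω) ^ 3) * Y₀'' ω + 1/2 * (τ₀ ω ^ 2 * (1 - τ₀ ω) ^ 2) * T₀ ω * T₀' ω) μ := ci12.add qi13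
  have ci14 : Integrable (fun ω => τ₀ ω ^ 4 * Y₀' ω ^ 2 + (1 - τ₀ ω) ^ 4 * Y₀'' ω ^ 2 + 1/4 * τ₀ ω ^ 4 * T₀ ω ^ 2 + 1/4 * (1 - τ₀ ω) ^ 4 * T₀' ω ^ 2 + τ₀ ω ^ 2 * (1 - τ₀ ω) ^ 2 + 2 * (τ₀ ω ^ 2 * (1 - τ₀ ω) ^ 2) * Y₀' ω * Y₀'' ω + τ₀ ω ^ 4 * Y₀' ω * T₀ ω + τ₀ ω ^ 2 * (1 - τ₀ ω) ^ 2 * Y₀' ω * T₀' ω + -2 * (τ₀ ω ^ 3 * (1 - τ₀ ω)) * Y₀' ω + τ₀ ω ^ 2 * (1 - τ₀ ω) ^ 2 * Y₀'' ω * T₀ ω + (1 - τ₀ ω) ^ 4 * Y₀'' ω * T₀' ω + -2 * (τ₀ ω * (1 - τ₀ ω) ^ 3) * Y₀'' ω + 1/2 * (τ₀ ω ^ 2 * (1 - τ₀ ω) ^ 2) * T₀ ω * T₀' ω + -(τ₀ ω ^ 3 * (1 - τ₀ ω)) * T₀ ω) μ := ci13.add qi14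
  have hsq : ∫ ω, Y ω ^ 2 ∂μ = ∫ ω, (τ₀ ω ^ 2 * Y₀' ω + (1 - τ₀ ω) ^ 2 * Y₀'' ω + 1/2 * τ₀ ω ^ 2 * T₀ ω + 1/2 * (1 - τ₀ ω) ^ 2 * T₀' ω - τ₀ ω * (1 - τ₀ ω)) ^ 2 ∂μ :=
    (hfix₀.comp (measurable_id.pow_const 2)).integral_eq
  have hring : ∫ ω, (τ₀ ω ^ 2 * Y₀' ω + (1 - τ₀ ω) ^ 2 * Y₀'' ω + 1/2 * τ₀ ω ^ 2 * T₀ ω + 1/2 * (1 - τ₀ ω) ^ 2 * T₀' ω - τ₀ ω * (1 - τ₀ ω)) ^ 2 ∂μ = ∫ ω, (τ₀ ω ^ 4 * Y₀' ω ^ 2 + (1 - τ₀ ω) ^ 4 * Y₀'' ω ^ 2 + 1/4 * τ₀ ω ^ 4 * T₀ ω ^ 2 + 1/4 * (1 - τ₀ ω) ^ 4 * T₀' ω ^ 2 + τ₀ ω ^ 2 * (1 - τ₀ ω) ^ 2 + 2 * (τ₀ ω ^ 2 * (1 - τ₀ ω) ^ 2) * Y₀' ω * Y₀'' ω + τ₀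 ω ^ 4 * Y₀' ω * T₀ ω + τ₀ ω ^ 2 * (1 - τ₀ ω) ^ 2 * Y₀' ω * T₀' ω + -2 * (τ₀ ω ^ 3 * (1 - τ₀ ω)) * Y₀' ω + τ₀ ω ^ 2 * (1 - τ₀ ω) ^ 2 * Y₀'' ω * T₀ ω + (1 - τ₀ ω) ^ 4 * Y₀'' ω * T₀' ω + -2 * (τ₀ ω * (1 - τ₀ ω) ^ 3) * Y₀'' ω + 1/2 * (τ₀ ω ^ 2 * (1 - τ₀ ω) ^ 2) * T₀ ω * T₀' ω + -(τ₀ ω ^ 3 * (1 - τ₀ ω)) * T₀ ω + -(τ₀ ω * (1 - τ₀ ω) ^ 3) * T₀' ω) ∂μ :=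
    integral_congr_ae (Filter.Eventually.of_forall fun ω => by ring)
  have hsplit2 : ∫ ω, (τ₀ ω ^ 4 * Y₀' ω ^ 2 + (1 - τ₀ ω) ^ 4 * Y₀'' ω ^ 2 + 1/4 * τ₀ ω ^ 4 * T₀ ω ^ 2 + 1/4 * (1 - τ₀ ω) ^ 4 * T₀' ω ^ 2 + τ₀ ω ^ 2 * (1 - τ₀ ω) ^ 2 + 2 * (τ₀ ω ^ 2 * (1 - τ₀ ω) ^ 2) * Y₀' ω * Y₀'' ω + τ₀ ω ^ 4 * Y₀' ω * T₀ ω + τ₀ ω ^ 2 * (1 - τ₀ ω) ^ 2 * Y₀' ω * T₀' ω + -2 * (τ₀ ω ^ 3 * (1 - τ₀ ω)) * Y₀' ω + τ₀ ω ^ 2 * (1 - τ₀ ω) ^ 2 * Y₀'' ω * T₀ ω + (1 - τ₀ ω) ^ 4 * Y₀'' ω * T₀' ω + -2 * (τ₀ ω * (1 - τ₀ ω) ^ 3) * Y₀'' ω + 1/2 * (τ₀ ω ^ 2 * (1 - τ₀ ω) ^ 2) * T₀ ω * T₀' ω + -(τ₀ ω ^ 3 * (1 - τ₀ ω)) * T₀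 ω + -(τ₀ ω * (1 - τ₀ ω) ^ 3) * T₀' ω) ∂μ = ∫ ω, τ₀ ω ^ 4 * Y₀' ω ^ 2 ∂μ + ∫ ω, (1 - τ₀ ω) ^ 4 * Y₀'' ω ^ 2 ∂μ + ∫ ω, 1/4 * τ₀ ω ^ 4 * T₀ ω ^ 2 ∂μ + ∫ ω, 1/4 * (1 - τ₀ ω) ^ 4 * T₀' ω ^ 2 ∂μ + ∫ ω, τ₀ ω ^ 2 * (1 - τ₀ ω) ^ 2 ∂μ + ∫ ω, 2 * (τ₀ ω ^ 2 * (1 - τ₀ ω) ^ 2) * Y₀' ω * Y₀'' ω ∂μ + ∫ ω, τ₀ ω ^ 4 * Y₀' ω * T₀ ω ∂μ + ∫ ω, τ₀ ω ^ 2 * (1 - τ₀ ω) ^ 2 * Y₀' ω * T₀' ω ∂μ + ∫ ω, -2 * (τ₀ ω ^ 3 * (1 - τ₀ ω)) * Y₀' ω ∂μ + ∫ ω, τ₀ ω ^ 2 * (1 - τ₀ ω) ^ 2 * Y₀'' ω * T₀ ω ∂μ + ∫ ω, (1 - τ₀ ω) ^ 4 * Y₀'' ω * T₀' ω ∂μ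 + ∫ ω, -2 * (τ₀ ω * (1 - τ₀ ω) ^ 3) * Y₀'' ω ∂μ + ∫ ω, 1/2 * (τ₀ ω ^ 2 * (1 - τ₀ ω) ^ 2) * T₀ ω * T₀' ω ∂μ + ∫ ω, -(τ₀ ω ^ 3 * (1 - τ₀ ω)) * T₀ ω ∂μ + ∫ ω, -(τ₀ ω * (1 - τ₀ ω) ^ 3) * T₀' ω ∂μ := by
    rw [integral_add ci14 qi15, integral_add ci13 qi14, integral_add ci12 qi13, integral_add ci11 qi12, integral_add ci10 qi11, integral_add ci9 qi10, integral_add ci8 qi9, integral_add ci7 qi8, integral_add ci6 qi7, integral_add ci5 qi6, integral_add ci4 qi5, integral_add ci3 qi4, integral_add ci2 qi3, integral_add qi1 qi2]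
  have hSv : ∫ ω, Y ω ^ 2 ∂μ = 1/16 := by
    have heq := (hsq.trans hring).trans hsplit2
    rw [q1v, q2v, q3v, q4v, q6v, q7v, q8v, q9v, q10v, q11v, q12v, q13v, q14v, q15v,
      u6v, u7v, u8v, u9v, u10v, u11v, u12v, u13v, u14v, u15v, u16v,
      hmY', hmY'', hsY', hsY'', hTv, hT'v, hT2v, hT'2v, hmean] at heq
    linarith
  refine ⟨hmean, ?_⟩
  rw [variance_eq_sub hY2]
  simp only [Pi.pow_apply]
  rw [hSv, hmean]
  norm_num
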